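/- arXiv:2401.16567 — 3 statements merged into one kernel-verified Lean document; each statement's English description precedes it below -/
import Mathlib

section
/- Let d ≥ 1, σ > 0, let ρ : ℝ^d → (0,∞) be a strictly positive measurable function, let L ∈ ℝ^{d×d} be invertible and Σ := L L^T. Let N_d(m, C) denote the Gaussian measure on ℝ^d with mean m and covariance C. Define the random walk Metropolis kernel M_{ρ,Σ}(x, A) := ∫_A min{1, ρ(x̃)/ρ(x)} N_d(x, σ²Σ)(dx̃) + 1_A(x)(1 − ∫_{ℝ^d} min{1, ρ(x̃)/ρ(x)} N_d(x, σ²Σ)(dx̃)), and define M_{ρ∘α, I_d} by the same formula with ρ replaced by ρ∘α, where α(y) := L y, and with proposal N_d(·, σ² I_d). Then for all x ∈ ℝ^d and all Borel sets A ⊆ ℝ^d, M_{ρ,Σ}(x, A) = M_{ρ∘α, I_d}(L^{-1} x, L^{-1}(A)), where L^{-1}(A) = {y : L y ∈ A}. -/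
open MeasureTheory Matrix

/-- The multivariate Gaussian density `N_d(x; m, C)` on `ℝ^d` with mean `m` and
(positive definite) covariance `C`. -/
noncomputable def gaussDensity (d : ℕ) (m : Fin d → ℝ)
    (C : Matrix (Fin d) (Fin d) ℝ) (x : Fin d → ℝ) : ℝ :=
  (2 * Real.pi) ^ (-(d : ℝ) / 2) * C.det ^ (-(1 : ℝ) / 2) *
    Real.exp (-((x - m) ⬝ᵥ C⁻¹.mulVec (x - m)) / 2)

/-- The multivariate Gaussian measure `N_d(m, C)` on `ℝ^d`. -/
noncomputable def gaussMeasure (d : ℕ) (m : Fin d → ℝ)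
    (C : Matrix (Fin d) (Fin d) ℝ) : Measure (Fin d → ℝ) :=
  volume.withDensity fun x => ENNReal.ofReal (gaussDensity d m C x)

/-- The value `M_{ρ,Σ}(x, A)` of the random walk Metropolis kernel with target
density `ρ`, proposal covariance `σ²C` and current state `x` on the set `A`. -/
noncomputable def rwmKernelVal (d : ℕ) (σ : ℝ) (ρ : (Fin d → ℝ) → ℝ)
    (C : Matrix (Fin d) (Fin d) ℝ) (x : Fin d → ℝ) (A : Set (Fin d → ℝ)) : ℝ :=
  (∫ z in A, min 1 (ρ z / ρ x) ∂(gaussMeasure d x (σ ^ 2 • C))) +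
    Set.indicator A (fun _ => (1 : ℝ)) x *
      (1 - ∫ z, min 1 (ρ z / ρ x) ∂(gaussMeasure d x (σ ^ 2 • C)))

lemma continuous_gaussDensity (d : ℕ) (m : Fin d → ℝ) (C : Matrix (Fin d) (Fin d) ℝ) :
    Continuous (gaussDensity d m C) := by
  unfold gaussDensity
  have hsub : Continuous fun x : Fin d → ℝ => x - m := continuous_id.sub continuous_const
  exact continuous_const.mul
    (Real.continuous_exp.comp
      ((hsub.dotProduct (Continuous.matrix_mulVec continuous_const hsub)).neg.div_const 2))

/-- ATT-friendliness of random walk Metropolis: with `Σ = L Lᵀ` and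
`α(y) = L y`, `M_{ρ,Σ}(x, A) = M_{ρ∘α, I}(L⁻¹ x, L⁻¹(A))`. -/
theorem rwm_att_friendly
    (d : ℕ) (hd : 1 ≤ d) (σ : ℝ) (hσ : 0 < σ)
    (ρ : (Fin d → ℝ) → ℝ) (hρ_meas : Measurable ρ) (hρ_pos : ∀ x, 0 < ρ x)
    (L : Matrix (Fin d) (Fin d) ℝ) (hL : IsUnit L.det)
    (S : Matrix (Fin d) (Fin d) ℝ) (hS : S = L * Lᵀ)
    (x : Fin d → ℝ) (A : Set (Fin d → ℝ)) (hA : MeasurableSet A) :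
    rwmKernelVal d σ ρ S x A =
      rwmKernelVal d σ (fun y => ρ (L.mulVec y)) 1 (L⁻¹.mulVec x)
        ((fun y => L.mulVec y) ⁻¹' A) := by
  have hdet : L.det ≠ 0 := hL.ne_zero
  have hσ2 : (0:ℝ) < σ ^ 2 := by positivity
  have hσ2' : (σ:ℝ) ^ 2 ≠ 0 := ne_of_gt hσ2
  have hTinv : ∀ v, L⁻¹.mulVec (L.mulVec v) = v := by
    intro v; rw [mulVec_mulVec, nonsing_inv_mul L hL, one_mulVec]
  have hTinv' : ∀ v, L.mulVec (L⁻¹.mulVec v) = v := by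
    intro v; rw [mulVec_mulVec, mul_nonsing_inv L hL, one_mulVec]
  have hSdet : IsUnit S.det := by
    rw [hS, det_mul, det_transpose]; exact hL.mul hL
  -- inverses of the scaled covariance matrices
  have hSmulinv : (σ ^ 2 • S)⁻¹ = (σ ^ 2)⁻¹ • S⁻¹ := by
    apply inv_eq_right_inv
    rw [Matrix.smul_mul, Matrix.mul_smul, smul_smul, mul_nonsing_inv _ hSdet,
      mul_inv_cancel₀ hσ2', one_smul]
  have hIinv : (σ ^ 2 • (1 : Matrix (Fin d) (Fin d) ℝ))⁻¹ = (σ ^ 2)⁻¹ • 1 := by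
    apply inv_eq_right_inv
    rw [Matrix.smul_mul, Matrix.mul_smul, smul_smul, one_mul,
      mul_inv_cancel₀ hσ2', one_smul]
  have hSinv : S⁻¹ = (L⁻¹)ᵀ * L⁻¹ := by
    rw [hS, Matrix.mul_inv_rev, transpose_nonsing_inv]
  -- pointwise density identity
  have hdens : ∀ z, gaussDensity d x (σ ^ 2 • S) z =
      |L.det|⁻¹ * gaussDensity d (L⁻¹.mulVec x) (σ ^ 2 • 1) (L⁻¹.mulVec z) := by
    intro z
    have hw : L⁻¹.mulVec z - L⁻¹.mulVec x = L⁻¹.mulVec (z - x) := (mulVec_sub _ _ _).symm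
    -- quadratic forms
    have hquadL : (z - x) ⬝ᵥ (σ ^ 2 • S)⁻¹.mulVec (z - x)
        = (σ ^ 2)⁻¹ * ((L⁻¹.mulVec (z - x)) ⬝ᵥ (L⁻¹.mulVec (z - x))) := by
      rw [hSmulinv, hSinv, smul_mulVec, dotProduct_smul, ← mulVec_mulVec,
        mulVec_transpose, smul_eq_mul]
      congr 1
      rw [dotProduct_comm, ← dotProduct_mulVec]
    have hquadR : (L⁻¹.mulVec z - L⁻¹.mulVec x) ⬝ᵥ
        (σ ^ 2 • (1 : Matrix (Fin d) (Fin d) ℝ))⁻¹.mulVec (L⁻¹.mulVec z - L⁻¹.mulVec x)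
        = (σ ^ 2)⁻¹ * ((L⁻¹.mulVec (z - x)) ⬝ᵥ (L⁻¹.mulVec (z - x))) := by
      rw [hw, hIinv, smul_mulVec, one_mulVec, dotProduct_smul, smul_eq_mul]
    -- determinants
    have hdetL : (σ ^ 2 • S).det = (σ ^ 2) ^ d * L.det ^ 2 := by
      rw [det_smul, Fintype.card_fin, hS, det_mul, det_transpose]; ring
    have hdetR : (σ ^ 2 • (1 : Matrix (Fin d) (Fin d) ℝ)).det = (σ ^ 2) ^ d := by
      rw [det_smul, Fintype.card_fin, det_one, mul_one]
    have habs : (L.det ^ 2 : ℝ) ^ (-(1:ℝ)/2) = |L.det|⁻¹ := by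
      rw [← sq_abs, ← Real.rpow_natCast |L.det| 2, ← Real.rpow_mul (abs_nonneg _)]
      norm_num [Real.rpow_neg_one]
    have hdetpow : ((σ ^ 2) ^ d * L.det ^ 2 : ℝ) ^ (-(1:ℝ)/2)
        = ((σ ^ 2) ^ d : ℝ) ^ (-(1:ℝ)/2) * |L.det|⁻¹ := by
      rw [Real.mul_rpow (by positivity) (sq_nonneg _), habs]
    unfold gaussDensity
    rw [hquadL, hquadR, hdetL, hdetR, hdetpow]
    ring
  -- the map measurability
  have hTcont : Continuous fun v : Fin d → ℝ => L.mulVec v :=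
    Continuous.matrix_mulVec continuous_const continuous_id
  have hTmeas : Measurable fun v : Fin d → ℝ => L.mulVec v := hTcont.measurable
  have hgmeas : Measurable fun y => ENNReal.ofReal
      (gaussDensity d (L⁻¹.mulVec x) (σ ^ 2 • (1 : Matrix (Fin d) (Fin d) ℝ)) y) :=
    ENNReal.measurable_ofReal.comp (continuous_gaussDensity _ _ _).measurable
  have hhmeas : Measurable fun z => ENNReal.ofReal
      (gaussDensity d (L⁻¹.mulVec x) (σ ^ 2 • (1 : Matrix (Fin d) (Fin d) ℝ))
        (L⁻¹.mulVec z)) := by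
    exact hgmeas.comp (Continuous.matrix_mulVec continuous_const continuous_id).measurable
  -- image of Lebesgue measure
  have hmapvol : Measure.map (fun v : Fin d → ℝ => L.mulVec v) volume
      = ENNReal.ofReal |L.det|⁻¹ • volume := by
    have hcoe : ⇑(Matrix.toLin' L) = fun v : Fin d → ℝ => L.mulVec v :=
      funext fun v => Matrix.toLin'_apply L v
    have h₁ := Measure.map_linearMap_addHaar_eq_smul_addHaar (volume : Measure (Fin d → ℝ))
      (f := Matrix.toLin' L) (by rw [LinearMap.det_toLin']; exact hdet)
    rw [hcoe, LinearMap.det_toLin', abs_inv] at h₁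
    exact h₁
  -- measure identity
  have hMeq : gaussMeasure d x (σ ^ 2 • S)
      = Measure.map (fun v : Fin d → ℝ => L.mulVec v)
          (gaussMeasure d (L⁻¹.mulVec x) (σ ^ 2 • 1)) := by
    ext s hs
    rw [Measure.map_apply hTmeas hs]
    unfold gaussMeasure
    rw [withDensity_apply _ hs, withDensity_apply _ (hTmeas hs)]
    have key := setLIntegral_map (μ := (volume : Measure (Fin d → ℝ))) hs
      (f := fun z => ENNReal.ofReal
        (gaussDensity d (L⁻¹.mulVec x) (σ ^ 2 • (1 : Matrix (Fin d) (Fin d) ℝ))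
          (L⁻¹.mulVec z))) hhmeas hTmeas
    simp only [hTinv] at key
    rw [← key, hmapvol, Measure.restrict_smul, lintegral_smul_measure]
    rw [smul_eq_mul, ← lintegral_const_mul _ hhmeas]
    congr 1
    funext z
    rw [hdens z, ENNReal.ofReal_mul (by positivity)]
  -- now the main computation
  have hρx : ρ (L.mulVec (L⁻¹.mulVec x)) = ρ x := by rw [hTinv']
  have hfmeas : Measurable fun z => min 1 (ρ z / ρ x) :=
    measurable_const.min (hρ_meas.div measurable_const)
  unfold rwmKernelVal
  have hind : Set.indicator A (fun _ => (1:ℝ)) x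
      = Set.indicator ((fun y => L.mulVec y) ⁻¹' A) (fun _ => (1:ℝ)) (L⁻¹.mulVec x) := by
    by_cases hx : x ∈ A
    · rw [Set.indicator_of_mem hx, Set.indicator_of_mem (by simp [Set.mem_preimage, hTinv', hx])]
    · rw [Set.indicator_of_notMem hx,
        Set.indicator_of_notMem (by simp [Set.mem_preimage, hTinv', hx])]
  have hset : (∫ z in A, min 1 (ρ z / ρ x) ∂(gaussMeasure d x (σ ^ 2 • S)))
      = ∫ z in (fun y => L.mulVec y) ⁻¹' A,
          min 1 (ρ (L.mulVec z) / ρ (L.mulVec (L⁻¹.mulVec x)))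
          ∂(gaussMeasure d (L⁻¹.mulVec x) (σ ^ 2 • 1)) := by
    rw [hMeq, setIntegral_map hA hfmeas.aestronglyMeasurable hTmeas.aemeasurable]
    simp only [hρx]
  have htot : (∫ z, min 1 (ρ z / ρ x) ∂(gaussMeasure d x (σ ^ 2 • S)))
      = ∫ z, min 1 (ρ (L.mulVec z) / ρ (L.mulVec (L⁻¹.mulVec x)))
          ∂(gaussMeasure d (L⁻¹.mulVec x) (σ ^ 2 • 1)) := by
    rw [hMeq, integral_map hTmeas.aemeasurable hfmeas.aestronglyMeasurable]
    simp only [hρx]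
  rw [hset, htot, hind]
end

section
/- Let d ≥ 1, let ρ : ℝ^d → (0,∞) be strictly positive, c ∈ ℝ^d, L ∈ ℝ^{d×d} invertible, Σ := L L^T, α(y) := L y + c, and ρ_α := ρ∘α. Define φ^{(1)}_{m,C}(x; ρ) := ρ(x)/N_d(x; m, C) and the level sets L_{m,C}(t; ρ) := {x ∈ ℝ^d : φ^{(1)}_{m,C}(x; ρ) > t}. Then for every x ∈ ℝ^d and every u > 0: L_{0, I_d}(u · φ^{(1)}_{0, I_d}(α^{-1}(x); ρ_α); ρ_α) = α^{-1}( L_{c, Σ}(u · φ^{(1)}_{c, Σ}(x; ρ); ρ) ), where α^{-1}(S) = {y : α(y) ∈ S}. -/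
open MeasureTheory Matrix

/-- The non-Gaussian factor `φ^{(1)}_{m,C}(x; ρ) = ρ(x) / N_d(x; m, C)` used in
general purpose elliptical slice sampling. -/
noncomputable def phiOne (d : ℕ) (m : Fin d → ℝ)
    (C : Matrix (Fin d) (Fin d) ℝ) (ρ : (Fin d → ℝ) → ℝ) (x : Fin d → ℝ) : ℝ :=
  ρ x / gaussDensity d m C x

/-- The superlevel set `L_{m,C}(t; ρ) = {x : φ^{(1)}_{m,C}(x; ρ) > t}`. -/
def levelSet (d : ℕ) (m : Fin d → ℝ) (C : Matrix (Fin d) (Fin d) ℝ)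
    (ρ : (Fin d → ℝ) → ℝ) (t : ℝ) : Set (Fin d → ℝ) :=
  {x | t < phiOne d m C ρ x}

/-- the superlevel-set identity for the GP-ESS factor under the affine
transformation `α(y) = L y + c` with `Σ = L Lᵀ`:
`L_{0,I}(u·φ^{(1)}_{0,I}(α⁻¹(x); ρ∘α); ρ∘α) = α⁻¹(L_{c,Σ}(u·φ^{(1)}_{c,Σ}(x; ρ); ρ))`. -/
theorem levelSet_affine_transform
    (d : ℕ) (hd : 1 ≤ d)
    (ρ : (Fin d → ℝ) → ℝ) (hρ_pos : ∀ x, 0 < ρ x)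
    (c : Fin d → ℝ) (L : Matrix (Fin d) (Fin d) ℝ) (hL : IsUnit L.det)
    (S : Matrix (Fin d) (Fin d) ℝ) (hS : S = L * Lᵀ)
    (x : Fin d → ℝ) (u : ℝ) (hu : 0 < u) :
    levelSet d 0 1 (fun y => ρ (L.mulVec y + c))
        (u * phiOne d 0 1 (fun y => ρ (L.mulVec y + c)) (L⁻¹.mulVec (x - c))) =
      (fun y => L.mulVec y + c) ⁻¹'
        (levelSet d c S ρ (u * phiOne d c S ρ x)) := by
  have hLdet : L.det ≠ 0 := hL.ne_zero
  have hdetS : 0 < S.det := by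
    rw [hS, Matrix.det_mul, Matrix.det_transpose]
    exact mul_self_pos.mpr hLdet
  set k : ℝ := S.det ^ (-(1 : ℝ) / 2) with hkdef
  have hk : 0 < k := Real.rpow_pos_of_pos hdetS _
  -- key gaussian identity
  have hgauss : ∀ y : Fin d → ℝ,
      gaussDensity d c S (L.mulVec y + c) = gaussDensity d 0 1 y * k := by
    intro y
    have hquad : (L.mulVec y + c - c) ⬝ᵥ S⁻¹.mulVec (L.mulVec y + c - c) = y ⬝ᵥ y := by
      have h1 : L.mulVec y + c - c = L.mulVec y := by abel
      rw [h1, hS, Matrix.mul_inv_rev, Matrix.mulVec_mulVec, Matrix.mul_assoc,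
        Matrix.nonsing_inv_mul L hL, Matrix.mul_one,
        ← Matrix.transpose_nonsing_inv, Matrix.dotProduct_mulVec,
        Matrix.vecMul_transpose, Matrix.mulVec_mulVec, Matrix.nonsing_inv_mul L hL,
        Matrix.one_mulVec]
    simp only [gaussDensity, hquad, sub_zero, inv_one, Matrix.one_mulVec,
      Matrix.det_one, Real.one_rpow, hkdef]
    ring
  have hx : L.mulVec (L⁻¹.mulVec (x - c)) + c = x := by
    rw [Matrix.mulVec_mulVec, Matrix.mul_nonsing_inv L hL, Matrix.one_mulVec,
      sub_add_cancel]
  -- phiOne identity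
  have hphi : ∀ y : Fin d → ℝ,
      phiOne d 0 1 (fun z => ρ (L.mulVec z + c)) y
        = phiOne d c S ρ (L.mulVec y + c) * k := by
    intro y
    have hg0 : 0 < gaussDensity d 0 1 y := by
      unfold gaussDensity
      rw [Matrix.det_one, Real.one_rpow]
      positivity
    simp only [phiOne, hgauss y]
    field_simp
  have hphix : phiOne d 0 1 (fun z => ρ (L.mulVec z + c)) (L⁻¹.mulVec (x - c))
      = phiOne d c S ρ x * k := by
    rw [hphi, hx]
  ext y
  simp only [levelSet, Set.mem_setOf_eq, Set.mem_preimage, hphi y, hphix]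
  constructor
  · intro h
    have := (mul_lt_mul_iff_of_pos_right hk).mp (by linarith [h] : (u * phiOne d c S ρ x) * k < phiOne d c S ρ (L.mulVec y + c) * k)
    exact this
  · intro h
    have := (mul_lt_mul_iff_of_pos_right hk).mpr h
    linarith
end

section
/- Let d ≥ 1, let ρ : ℝ^d → (0,∞) be strictly positive, c ∈ ℝ^d, L ∈ ℝ^{d×d} invertible, Σ := L L^T, α(y) := L y + c, and ρ_α := ρ∘α. Define φ^{(1)}_{m,C}(x; ρ) := ρ(x)/N_d(x; m, C), the superlevel sets L_{m,C}(t; ρ) := {x : φ^{(1)}_{m,C}(x; ρ) > t}, the ellipse parametrization p̃_{x,v,m}(ω) := cos(ω)(x − m) + sin(ω)(v − m) + m, and let p_{x,v,m} be its restriction to [0, 2π). Then for all x, v ∈ ℝ^d, all u > 0, and every Borel set A ⊆ ℝ^d: p_{α^{-1}(x), α^{-1}(v), 0}^{-1}( α^{-1}(A) ∩ L_{0, I_d}(u · φ^{(1)}_{0, I_d}(α^{-1}(x); ρ_α); ρ_α) ) = p_{x, v, c}^{-1}( A ∩ L_{c, Σ}(u · φ^{(1)}_{c, Σ}(x; ρ);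 ρ) ), as subsets of [0, 2π). -/
open MeasureTheory Matrix

/-- The ellipse parametrization
`p̃_{x,v,m}(ω) = cos(ω)(x − m) + sin(ω)(v − m) + m`. -/
noncomputable def ellipsePath {d : ℕ} (x v m : Fin d → ℝ) (ω : ℝ) : Fin d → ℝ :=
  Real.cos ω • (x - m) + Real.sin ω • (v - m) + m

/-- The preimage under the restriction `p_{x,v,m}` of the ellipse parametrization to
the angle interval `[0, 2π)`, viewed as a subset of `[0, 2π) ⊆ ℝ`. -/
noncomputable def ellipsePreimage {d : ℕ} (x v m : Fin d → ℝ)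
    (S : Set (Fin d → ℝ)) : Set ℝ :=
  Set.Ico (0 : ℝ) (2 * Real.pi) ∩ (fun ω => ellipsePath x v m ω) ⁻¹' S

/-- the angle-preimage identity for GP-ESS under the affine
transformation `α(y) = L y + c` with `Σ = L Lᵀ`:
`p_{α⁻¹(x),α⁻¹(v),0}⁻¹(α⁻¹(A) ∩ L_{0,I}(u·φ^{(1)}_{0,I}(α⁻¹(x); ρ∘α); ρ∘α))
  = p_{x,v,c}⁻¹(A ∩ L_{c,Σ}(u·φ^{(1)}_{c,Σ}(x; ρ); ρ))` as subsets of `[0, 2π)`. -/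
theorem ellipsePreimage_affine_transform
    (d : ℕ) (hd : 1 ≤ d)
    (ρ : (Fin d → ℝ) → ℝ) (hρ_pos : ∀ x, 0 < ρ x)
    (c : Fin d → ℝ) (L : Matrix (Fin d) (Fin d) ℝ) (hL : IsUnit L.det)
    (S : Matrix (Fin d) (Fin d) ℝ) (hS : S = L * Lᵀ)
    (x v : Fin d → ℝ) (u : ℝ) (hu : 0 < u)
    (A : Set (Fin d → ℝ)) (hA : MeasurableSet A) :
    ellipsePreimage (L⁻¹.mulVec (x - c)) (L⁻¹.mulVec (v - c)) 0
        (((fun y => L.mulVec y + c) ⁻¹' A) ∩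
          levelSet d 0 1 (fun y => ρ (L.mulVec y + c))
            (u * phiOne d 0 1 (fun y => ρ (L.mulVec y + c))
              (L⁻¹.mulVec (x - c)))) =
      ellipsePreimage x v c
        (A ∩ levelSet d c S ρ (u * phiOne d c S ρ x)) := by

  have hLdet : L.det ≠ 0 := hL.ne_zero
  have hLTdet : IsUnit Lᵀ.det := by rwa [Matrix.det_transpose]
  have hinv : L * L⁻¹ = 1 := Matrix.mul_nonsing_inv L hL
  have hinv' : L⁻¹ * L = 1 := Matrix.nonsing_inv_mul L hL
  have hinvT : Lᵀ * Lᵀ⁻¹ = 1 := Matrix.mul_nonsing_inv Lᵀ hLTdet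
  have hdetS : 0 < S.det := by
    rw [hS, Matrix.det_mul, Matrix.det_transpose]
    exact mul_self_pos.mpr hLdet
  -- the affine map sends the transformed ellipse path to the original one
  have hpath : ∀ ω : ℝ,
      L.mulVec (ellipsePath (L⁻¹.mulVec (x - c)) (L⁻¹.mulVec (v - c)) 0 ω) + c
        = ellipsePath x v c ω := by
    intro ω
    simp only [ellipsePath, sub_zero, add_zero, Matrix.mulVec_add,
      Matrix.mulVec_smul, Matrix.mulVec_mulVec, hinv, Matrix.one_mulVec]
  -- quadratic form identity
  have hquad : ∀ y : Fin d → ℝ,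
      (L.mulVec y) ⬝ᵥ S⁻¹.mulVec (L.mulVec y) = y ⬝ᵥ y := by
    intro y
    have h1 : S⁻¹.mulVec (L.mulVec y) = Lᵀ⁻¹.mulVec y := by
      rw [hS, Matrix.mul_inv_rev, Matrix.mulVec_mulVec, Matrix.mul_assoc,
        hinv', Matrix.mul_one]
    have h2 : Lᵀ⁻¹ᵀ * L = 1 := by
      rw [show Lᵀ⁻¹ᵀ * L = (Lᵀ * Lᵀ⁻¹)ᵀ by
        rw [Matrix.transpose_mul, Matrix.transpose_transpose], hinvT,
        Matrix.transpose_one]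
    rw [h1, Matrix.dotProduct_mulVec, ← Matrix.mulVec_transpose,
      Matrix.mulVec_mulVec, h2, Matrix.one_mulVec]
  -- gaussian density transformation
  have hg : ∀ y : Fin d → ℝ,
      gaussDensity d c S (L.mulVec y + c)
        = S.det ^ (-(1 : ℝ) / 2) * gaussDensity d 0 1 y := by
    intro y
    unfold gaussDensity
    rw [add_sub_cancel_right, hquad y]
    have hone : (1 : Matrix (Fin d) (Fin d) ℝ)⁻¹ = 1 := by simp
    simp only [Matrix.det_one, Real.one_rpow, hone, sub_zero,
      Matrix.one_mulVec]
    ring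
  have hgpos : ∀ y : Fin d → ℝ, 0 < gaussDensity d 0 1 y := by
    intro y
    unfold gaussDensity
    have h2π : (0:ℝ) < 2 * Real.pi := by positivity
    exact mul_pos (mul_pos (Real.rpow_pos_of_pos h2π _)
      (by simp [Matrix.det_one])) (Real.exp_pos _)
  -- phiOne transformation
  have hkpos : (0:ℝ) < S.det ^ ((1:ℝ)/2) := Real.rpow_pos_of_pos hdetS _
  have hphi : ∀ y : Fin d → ℝ,
      phiOne d c S ρ (L.mulVec y + c)
        = S.det ^ ((1:ℝ)/2) * phiOne d 0 1 (fun y => ρ (L.mulVec y + c)) y := by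
    intro y
    unfold phiOne
    rw [hg y, show (-(1:ℝ)/2) = -((1:ℝ)/2) by ring, Real.rpow_neg hdetS.le]
    have := (hgpos y).ne'
    field_simp
  have hx : L.mulVec (L⁻¹.mulVec (x - c)) + c = x := by
    rw [Matrix.mulVec_mulVec, hinv, Matrix.one_mulVec, sub_add_cancel]
  ext ω
  simp only [ellipsePreimage, Set.mem_inter_iff, Set.mem_preimage,
    Set.mem_setOf_eq, levelSet]
  constructor
  · rintro ⟨hω, hA', hlev⟩
    refine ⟨hω, ?_, ?_⟩
    · rw [← hpath ω]; exact hA'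
    · rw [← hpath ω, ← hx, hphi, hphi]
      rw [hx]
      calc u * (S.det ^ ((1:ℝ)/2) *
            phiOne d 0 1 (fun y => ρ (L.mulVec y + c)) (L⁻¹.mulVec (x - c)))
          = S.det ^ ((1:ℝ)/2) * (u *
            phiOne d 0 1 (fun y => ρ (L.mulVec y + c)) (L⁻¹.mulVec (x - c))) := by ring
        _ < _ := by exact (mul_lt_mul_iff_right₀ hkpos).mpr hlev
  · rintro ⟨hω, hA', hlev⟩
    refine ⟨hω, ?_, ?_⟩
    · show L.mulVec _ + c ∈ A
      rw [hpath ω]; exact hA'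
    · rw [← hpath ω, ← hx, hphi, hphi, hx] at hlev
      have h := hlev
      rw [show u * (S.det ^ ((1:ℝ)/2) *
            phiOne d 0 1 (fun y => ρ (L.mulVec y + c)) (L⁻¹.mulVec (x - c)))
          = S.det ^ ((1:ℝ)/2) * (u *
            phiOne d 0 1 (fun y => ρ (L.mulVec y + c)) (L⁻¹.mulVec (x - c))) by ring] at h
      exact (mul_lt_mul_iff_right₀ hkpos).mp h
end
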